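/- (Max-min Lyapunov function decrease, single-output case) Let Γ ∈ ℝ^{n×ν} be a matrix whose kernel is one-dimensional and spanned by a vector v ≫ 0, and such that each row of Γ has exactly one negative entry. Write Γ = [β_{ij} − α_{ij}] with α_{ij}, β_{ij} ≥ 0 and α_{ij}β_{ij} = 0. Let R : ℝ̄₊^n → ℝ̄₊^ν be C¹ with ∂R_j/∂x_i ≥ 0 when α_{ij} > 0 and ∂R_j/∂x_i = 0 when α_{ij} = 0. Then for each index q, along any solution of ẋ = ΓR(x) the quantity (1/v_q)R_q(x(t)) satisfies d/dt [(1/v_q) R_q(x(t))] ≤ 0 whenever (1/v_q)R_q(x(t)) = max_{1≤k≤ν} (1/v_k)R_k(x(t)), and d/dt [(1/v_q) R_q(x(t))] ≥ 0 whenever (1/v_q)R_q(x(t)) = min_{1≤k≤ν} (1/v_k)R_k(x(t)). Consequently V(x) = max_k (1/v_k)R_k(x) − min_k (1/v_k)R_k(x) is nonincreasing along solutions. -/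

import Mathlib

open Finset Set Filter Topology


private lemma sup'_antitone_aux {m : ℕ} (hm : 0 < m)
    (f : Fin m → ℝ → ℝ) (d : Fin m → ℝ → ℝ)
    (hd : ∀ k t, HasDerivAt (f k) (d k t) t)
    (hsign : ∀ t k, (∀ j, f j t ≤ f k t) → d k t ≤ 0) :
    ∀ a b : ℝ, a ≤ b →
      univ.sup' ⟨⟨0, hm⟩, mem_univ _⟩ (fun k => f k b) ≤
      univ.sup' ⟨⟨0, hm⟩, mem_univ _⟩ (fun k => f k a) := by
  intro a b hab
  have ne : (univ : Finset (Fin m)).Nonempty := ⟨⟨0, hm⟩, mem_univ _⟩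
  set M : ℝ → ℝ := fun t => univ.sup' ne (fun k => f k t) with hM
  have hMc : Continuous M := continuous_iff_continuousAt.2 fun t =>
    ContinuousAt.finset_sup'_apply ne (fun k _ => (hd k t).continuousAt)
  have hslope : ∀ t : ℝ, ∀ r : ℝ, 0 < r → ∀ᶠ z in 𝓝[>] t, slope M t z < r := by
    intro t r hr
    have hall : ∀ k : Fin m, ∀ᶠ z in 𝓝[>] t, f k z < M t + r * (z - t) := by
      intro k
      rcases lt_or_eq_of_le (Finset.le_sup' (fun k => f k t) (mem_univ k) : f k t ≤ M t) with h | h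
      · have h1 : ∀ᶠ z in 𝓝 t, f k z < M t := (hd k t).continuousAt.eventually_lt_const h
        have h2 : ∀ᶠ z in 𝓝[>] t, f k z < M t := eventually_nhdsWithin_of_eventually_nhds h1
        filter_upwards [h2, self_mem_nhdsWithin] with z hz (hz' : t < z)
        have : 0 ≤ r * (z - t) := mul_nonneg hr.le (by linarith)
        linarith
      · have hdk : d k t ≤ 0 := hsign t k (fun j =>
          (Finset.le_sup' (fun k => f k t) (mem_univ j)).trans h.ge)
        have h1 : Tendsto (slope (f k) t) (𝓝[≠] t) (𝓝 (d k t)) :=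
          hasDerivAt_iff_tendsto_slope.1 (hd k t)
        have h2 : ∀ᶠ z in 𝓝[≠] t, slope (f k) t z < r :=
          h1.eventually_lt_const (lt_of_le_of_lt hdk hr)
        have h3 : ∀ᶠ z in 𝓝[>] t, slope (f k) t z < r :=
          h2.filter_mono (nhdsWithin_mono t fun z hz => ne_of_gt hz)
        filter_upwards [h3, self_mem_nhdsWithin] with z hz (hz' : t < z)
        rw [slope_def_field, div_lt_iff₀ (by linarith : (0:ℝ) < z - t)] at hz
        linarith [hz, h.le]
    have hall' : ∀ᶠ z in 𝓝[>] t, ∀ k, f k z < M t + r * (z - t) := eventually_all.2 hall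
    filter_upwards [hall', self_mem_nhdsWithin] with z hz (hz' : t < z)
    have hMz : M z < M t + r * (z - t) := by
      rw [hM]
      exact (Finset.sup'_lt_iff ne).2 fun k _ => hz k
    rw [slope_def_field, div_lt_iff₀ (by linarith : (0:ℝ) < z - t)]
    linarith
  have hMab : ∀ ε : ℝ, 0 < ε → M b ≤ M a + ε * (b - a) := by
    intro ε hε
    have hB : ∀ z : ℝ, HasDerivAt (fun z => M a + ε * (z - a)) ε z := by
      intro z
      have := (((hasDerivAt_id z).sub_const a).const_mul ε).const_add (M a)
      simpa using this
    have := image_le_of_liminf_slope_right_lt_deriv_boundary (f := M) (f' := fun _ => 0)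
      (a := a) (b := b) hMc.continuousOn
      (fun x _ r hr => (hslope x r hr).frequently)
      (by simp) hB (fun x _ _ => hε)
    simpa using this ⟨hab, le_rfl⟩
  rcases eq_or_lt_of_le hab with rfl | hab'
  · exact le_rfl
  · have : ∀ δ : ℝ, 0 < δ → M b ≤ M a + δ := by
      intro δ hδ
      have := hMab (δ / (b - a)) (div_pos hδ (by linarith))
      rw [div_mul_cancel₀] at this
      · exact this
      · linarith
    exact le_of_forall_pos_le_add this


/-- max-min Lyapunov function decrease for networks whose
stoichiometry matrix has one-dimensional kernel spanned by `v ≫ 0` and a unique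
negative entry in each row.  Along any solution of `ẋ = ΓR(x)`, the rate
`(1/v_q)R_q` is nonincreasing when maximal, nondecreasing when minimal, and
hence `V = max_k (1/v_k)R_k − min_k (1/v_k)R_k` is nonincreasing. -/
theorem maxmin_lyapunov_decrease (n ν : ℕ) (hν : 0 < ν)
    (α β : Matrix (Fin n) (Fin ν) ℝ)
    (hα : ∀ i j, 0 ≤ α i j) (hβ : ∀ i j, 0 ≤ β i j)
    (hprod : ∀ i j, α i j * β i j = 0)
    (Γ : Matrix (Fin n) (Fin ν) ℝ) (hΓ : ∀ i j, Γ i j = β i j - α i j)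
    (honeneg : ∀ i : Fin n, ∃! j : Fin ν, Γ i j < 0)
    (v : Fin ν → ℝ) (hvpos : ∀ j, 0 < v j) (hvker : Γ.mulVec v = 0)
    (hker1 : ∀ u : Fin ν → ℝ, Γ.mulVec u = 0 → ∃ a : ℝ, u = a • v)
    (R : (Fin n → ℝ) → Fin ν → ℝ) (hR : ContDiff ℝ 1 R)
    (hRnonneg : ∀ y : Fin n → ℝ, (∀ i, 0 ≤ y i) → ∀ j, 0 ≤ R y j)
    (hmono : ∀ y : Fin n → ℝ, (∀ i, 0 ≤ y i) → ∀ (i : Fin n) (j : Fin ν),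
      (0 < α i j → 0 ≤ fderiv ℝ (fun z => R z j) y (Pi.single i 1)) ∧
      (α i j = 0 → fderiv ℝ (fun z => R z j) y (Pi.single i 1) = 0))
    (x : ℝ → Fin n → ℝ)
    (hsol : ∀ t : ℝ, HasDerivAt x (Γ.mulVec (R (x t))) t)
    (hxnonneg : ∀ (t : ℝ) (i : Fin n), 0 ≤ x t i) :
    (∀ (t : ℝ) (q : Fin ν),
        (∀ k, R (x t) k / v k ≤ R (x t) q / v q) →
        deriv (fun s => R (x s) q / v q) t ≤ 0) ∧
    (∀ (t : ℝ) (q : Fin ν),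
        (∀ k, R (x t) q / v q ≤ R (x t) k / v k) →
        0 ≤ deriv (fun s => R (x s) q / v q) t) ∧
    (∀ s t : ℝ, s ≤ t →
        (univ.sup' ⟨⟨0, hν⟩, mem_univ _⟩ (fun k => R (x t) k / v k) -
          univ.inf' ⟨⟨0, hν⟩, mem_univ _⟩ (fun k => R (x t) k / v k)) ≤
        (univ.sup' ⟨⟨0, hν⟩, mem_univ _⟩ (fun k => R (x s) k / v k) -
          univ.inf' ⟨⟨0, hν⟩, mem_univ _⟩ (fun k => R (x s) k / v k))) := by
  classical
  -- abbreviations (as plain definitions, not `set`, to avoid rewriting the goal)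
  let w : ℝ → Fin n → ℝ := fun t => Γ.mulVec (R (x t))
  let c : ℝ → Fin n → Fin ν → ℝ := fun t i k => fderiv ℝ (fun z => R z k) (x t) (Pi.single i 1)
  let d : Fin ν → ℝ → ℝ := fun k t => (∑ i, c t i k * w t i) / v k
  have hdiff : ∀ k, Differentiable ℝ (fun z => R z k) := fun k =>
    (contDiff_pi.1 hR k).differentiable one_ne_zero
  -- the chain-rule computation
  have hkey : ∀ (k : Fin ν) (t : ℝ), HasDerivAt (fun s => R (x s) k / v k) (d k t) t := by
    intro k t
    have h1 : HasFDerivAt (fun z => R z k) (fderiv ℝ (fun z => R z k) (x t)) (x t) :=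
      (hdiff k (x t)).hasFDerivAt
    have h2 : HasDerivAt (fun s => R (x s) k)
        (fderiv ℝ (fun z => R z k) (x t) (w t)) t := h1.comp_hasDerivAt t (hsol t)
    have h3 : fderiv ℝ (fun z => R z k) (x t) (w t) = ∑ i, c t i k * w t i := by
      have hwsum : (∑ i, w t i • (Pi.single i (1:ℝ) : Fin n → ℝ)) = w t := by
        have hsingle : ∀ i : Fin n, w t i • (Pi.single i (1:ℝ) : Fin n → ℝ)
            = Pi.single i (w t i) := by
          intro i
          rw [← Pi.single_smul, smul_eq_mul, mul_one]
        simp_rw [hsingle]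
        exact Finset.univ_sum_single (w t)
      conv_lhs => rw [← hwsum]
      rw [map_sum]
      refine Finset.sum_congr rfl fun i _ => ?_
      rw [map_smul, smul_eq_mul, mul_comm]
    have h4 := h2.div_const (v k)
    rw [h3] at h4
    exact h4
  -- off-diagonal entries of rows with a reactant in column q are nonnegative
  have hΓnn : ∀ (i : Fin n) (q : Fin ν), 0 < α i q → ∀ j, j ≠ q → 0 ≤ Γ i j := by
    intro i q hiq j hj
    obtain ⟨j₀, hj₀, huniq⟩ := honeneg i
    have hβq : β i q = 0 := by
      rcases mul_eq_zero.1 (hprod i q) with h | h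
      · exact absurd h (ne_of_gt hiq)
      · exact h
    have hΓq : Γ i q < 0 := by rw [hΓ, hβq]; linarith
    by_contra hneg
    push_neg at hneg
    have h1 : j = j₀ := huniq j hneg
    have h2 : q = j₀ := huniq q hΓq
    exact hj (h1.trans h2.symm)
  -- rewrite w t i using the kernel identity
  have hwsign : ∀ (t : ℝ) (q : Fin ν) (i : Fin n), 0 < α i q →
      w t i = ∑ j, Γ i j * v j * (R (x t) j / v j - R (x t) q / v q) := by
    intro t q i hiq
    have hker : ∑ j, Γ i j * v j = 0 := by
      have := congrFun hvker i
      simpa [Matrix.mulVec, dotProduct] using this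
    have h0 : w t i = ∑ j, Γ i j * R (x t) j := by
      simp [w, Matrix.mulVec, dotProduct]
    rw [h0]
    have hterm : ∀ j : Fin ν, Γ i j * R (x t) j =
        Γ i j * v j * (R (x t) j / v j - R (x t) q / v q)
          + (Γ i j * v j) * (R (x t) q / v q) := by
      intro j
      have hvj := (hvpos j).ne'
      field_simp
      ring
    rw [Finset.sum_congr rfl fun j _ => hterm j, Finset.sum_add_distrib,
      ← Finset.sum_mul, hker, zero_mul, add_zero]
  -- sign of d at max / min
  have hmax : ∀ (t : ℝ) (q : Fin ν),
      (∀ k, R (x t) k / v k ≤ R (x t) q / v q) → d q t ≤ 0 := by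
    intro t q hq
    apply div_nonpos_of_nonpos_of_nonneg _ (hvpos q).le
    apply Finset.sum_nonpos
    intro i _
    rcases (hα i q).eq_or_lt with hz | hpos
    · have hc0 : c t i q = 0 := (hmono (x t) (hxnonneg t) i q).2 hz.symm
      rw [hc0, zero_mul]
    · have hc : 0 ≤ c t i q := (hmono (x t) (hxnonneg t) i q).1 hpos
      have hwle : w t i ≤ 0 := by
        rw [hwsign t q i hpos]
        apply Finset.sum_nonpos
        intro j _
        rcases eq_or_ne j q with rfl | hj
        · simp
        · exact mul_nonpos_of_nonneg_of_nonpos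
            (mul_nonneg (hΓnn i q hpos j hj) (hvpos j).le) (sub_nonpos.2 (hq j))
      exact mul_nonpos_of_nonneg_of_nonpos hc hwle
  have hmin : ∀ (t : ℝ) (q : Fin ν),
      (∀ k, R (x t) q / v q ≤ R (x t) k / v k) → 0 ≤ d q t := by
    intro t q hq
    apply div_nonneg _ (hvpos q).le
    apply Finset.sum_nonneg
    intro i _
    rcases (hα i q).eq_or_lt with hz | hpos
    · have hc0 : c t i q = 0 := (hmono (x t) (hxnonneg t) i q).2 hz.symm
      rw [hc0, zero_mul]
    · have hc : 0 ≤ c t i q := (hmono (x t) (hxnonneg t) i q).1 hpos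
      have hwle : 0 ≤ w t i := by
        rw [hwsign t q i hpos]
        apply Finset.sum_nonneg
        intro j _
        rcases eq_or_ne j q with rfl | hj
        · simp
        · exact mul_nonneg
            (mul_nonneg (hΓnn i q hpos j hj) (hvpos j).le) (sub_nonneg.2 (hq j))
      exact mul_nonneg hc hwle
  refine ⟨?_, ?_, ?_⟩
  · intro t q hq
    rw [(hkey q t).deriv]
    exact hmax t q hq
  · intro t q hq
    rw [(hkey q t).deriv]
    exact hmin t q hq
  · intro s t hst
    have hsup := sup'_antitone_aux hν (fun k u => R (x u) k / v k) (fun k u => d k u)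
      (fun k u => hkey k u) (fun u k h => hmax u k h) s t hst
    have hinfneg := sup'_antitone_aux hν (fun k u => -(R (x u) k / v k)) (fun k u => -(d k u))
      (fun k u => (hkey k u).neg)
      (fun u k h => neg_nonpos.2 (hmin u k fun j => le_of_neg_le_neg (h j))) s t hst
    have hnegeq : ∀ u : ℝ,
        univ.sup' ⟨⟨0, hν⟩, mem_univ _⟩ (fun k => -(R (x u) k / v k)) =
        - univ.inf' ⟨⟨0, hν⟩, mem_univ _⟩ (fun k => R (x u) k / v k) := by
      intro u
      apply le_antisymm
      · refine Finset.sup'_le _ _ ?_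
        intro k hk
        exact neg_le_neg (Finset.inf'_le _ hk)
      · have h2 : - univ.sup' ⟨⟨0, hν⟩, mem_univ _⟩ (fun k => -(R (x u) k / v k)) ≤
            univ.inf' ⟨⟨0, hν⟩, mem_univ _⟩ (fun k => R (x u) k / v k) := by
          refine Finset.le_inf' _ _ ?_
          intro k hk
          rw [neg_le]
          exact Finset.le_sup' (fun k => -(R (x u) k / v k)) hk
        linarith
    have hA : univ.sup' ⟨⟨0, hν⟩, mem_univ _⟩ (fun k => R (x t) k / v k) ≤
        univ.sup' ⟨⟨0, hν⟩, mem_univ _⟩ (fun k => R (x s) k / v k) := hsup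
    have hB := hinfneg
    rw [show (fun k => (fun k u => -(R (x u) k / v k)) k t) = fun k => -(R (x t) k / v k) from rfl,
      show (fun k => (fun k u => -(R (x u) k / v k)) k s) = fun k => -(R (x s) k / v k) from rfl,
      hnegeq t, hnegeq s] at hB
    linarith
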